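/- Let K be an algebraically closed field, k₁, k₂ positive integers, A = diag(0,μ) with μ ∈ K, and B = [[0,0],[1,ξ]] with ξ ∈ K. Then the image of the map (X,Y) ↦ AX^{k₁} + BY^{k₂} on M(2,K) is exactly the set of matrices with zero first row. -/

import Mathlib

open Matrix

lemma pow_of_idem {R : Type*} [Monoid R] {a : R} (h : a * a = a) :
    ∀ k, 0 < k → a ^ k = a
  | 1, _ => pow_one a
  | (k+2), _ => by rw [pow_succ, pow_of_idem h (k+1) k.succ_pos, h]

theorem stmt9 (K : Type*) [Field K] [IsAlgClosed K] (k₁ k₂ : ℕ)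
    (hk₁ : 0 < k₁) (hk₂ : 0 < k₂) (μ ξ : K) :
    {C : Matrix (Fin 2) (Fin 2) K | ∃ X Y : Matrix (Fin 2) (Fin 2) K,
        C = !![(0 : K), 0; 0, μ] * X ^ k₁ + !![(0 : K), 0; 1, ξ] * Y ^ k₂}
      = {C : Matrix (Fin 2) (Fin 2) K | C 0 0 = 0 ∧ C 0 1 = 0} := by
  ext C
  simp only [Set.mem_setOf_eq]
  constructor
  · rintro ⟨X, Y, rfl⟩
    constructor <;>
      simp [Matrix.add_apply, Matrix.mul_apply, Matrix.vecMul, dotProduct, Fin.sum_univ_two]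
  · rintro ⟨h0, h1⟩
    set c := C 1 0 with hc
    set d := C 1 1 with hd
    by_cases hcd : ξ * c - d = 0
    · obtain ⟨t, ht⟩ := IsAlgClosed.exists_pow_nat_eq c hk₂
      refine ⟨0, t • !![1, ξ; 0, 0], ?_⟩
      have hE : (!![1, ξ; 0, 0] : Matrix (Fin 2) (Fin 2) K) * !![1, ξ; 0, 0]
          = !![1, ξ; 0, 0] := by
        ext i j
        fin_cases i <;> fin_cases j <;>
          simp [Matrix.mul_apply, Fin.sum_univ_two]
      have hdc : d = ξ * c := (sub_eq_zero.mp hcd).symm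
      rw [smul_pow, pow_of_idem hE k₂ hk₂, ht, zero_pow hk₁.ne', Matrix.mul_zero,
        zero_add]
      ext i j
      fin_cases i <;> fin_cases j <;>
        simp [Matrix.mul_apply, Fin.sum_univ_two, h0, h1, ← hc, ← hd, hdc] <;> ring
    · set r := c * (c - 1) / (ξ * c - d) with hr
      set p := c - ξ * r with hp
      set s := 1 - p with hs
      set q := d - ξ * s with hq
      refine ⟨0, !![p, q; r, s], ?_⟩
      have hY : (!![p, q; r, s] : Matrix (Fin 2) (Fin 2) K) * !![p, q; r, s]
          = !![p, q; r, s] := by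
        ext i j
        fin_cases i <;> fin_cases j <;>
          · simp only [Matrix.mul_apply, Fin.sum_univ_two, Matrix.cons_val', Matrix.cons_val_zero,
              Matrix.cons_val_one, Matrix.head_cons, Matrix.head_fin_const, Matrix.empty_val',
              Matrix.cons_val_fin_one, Matrix.of_apply, Fin.zero_eta, Fin.mk_one]
            have hcd' : c * ξ - d ≠ 0 := by rwa [mul_comm]
            simp only [hq, hs, hp, hr]
            field_simp
            ring
      rw [pow_of_idem hY k₂ hk₂, zero_pow hk₁.ne', Matrix.mul_zero, zero_add]
      ext i j
      fin_cases i <;> fin_cases j <;>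
        simp [Matrix.mul_apply, Fin.sum_univ_two, h0, h1, ← hc, ← hd, hq, hs, hp] <;> ring
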